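/- Let ω, ω₁, ω₂, … ∈ C([0,2], [0,∞)) with ωₙ(0) = ω(0) = 1, and suppose ωₙ → ω in the Hausdorff metric on C⁺₁[0,2] (Hausdorff distance, ℓ∞ in ℝ², between graphs extended by the ray {2}×[0,∞)). Then ωₙ|_{[0,1]} → ω|_{[0,1]} uniformly on [0,1]. -/
import Mathlib


set_option autoImplicit false

open Set Filter

/-- If positive continuous paths `ωₙ` on `[0,2]` with `ωₙ(0) = 1` converge to `ω` in the
Hausdorff metric (graphs extended by the ray `{2} × [0,∞)`, `ℓ∞` norm on `ℝ²`), then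
`ωₙ|[0,1] → ω|[0,1]` uniformly. -/
theorem uniform_convergence_of_hausdorff_convergence
    (ωn : ℕ → ℝ → ℝ) (ω : ℝ → ℝ)
    (hcn : ∀ n, ContinuousOn (ωn n) (Icc (0 : ℝ) 2)) (hc : ContinuousOn ω (Icc (0 : ℝ) 2))
    (h0n : ∀ n, ωn n 0 = 1) (h0 : ω 0 = 1)
    (hposn : ∀ n, ∀ t ∈ Icc (0 : ℝ) 2, 0 ≤ ωn n t)
    (hpos : ∀ t ∈ Icc (0 : ℝ) 2, 0 ≤ ω t)
    (hconv : Tendsto (fun n =>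
        EMetric.hausdorffEdist
          ((fun t => ((t, ωn n t) : ℝ × ℝ)) '' Icc (0 : ℝ) 2 ∪ {(2 : ℝ)} ×ˢ Ici (0 : ℝ))
          ((fun t => ((t, ω t) : ℝ × ℝ)) '' Icc (0 : ℝ) 2 ∪ {(2 : ℝ)} ×ˢ Ici (0 : ℝ)))
      atTop (nhds 0)) :
    TendstoUniformlyOn (fun n t => ωn n t) ω atTop (Icc (0 : ℝ) 1) := by
  rw [Metric.tendstoUniformlyOn_iff]
  intro ε hε
  have hεp : 0 < ε / 2 := by positivity
  have huc : UniformContinuousOn ω (Icc (0 : ℝ) 2) :=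
    isCompact_Icc.uniformContinuousOn_of_continuous hc
  rw [Metric.uniformContinuousOn_iff] at huc
  obtain ⟨δ, hδ, hδω⟩ := huc (ε / 2) hεp
  set δ' : ℝ := min δ (min 1 (ε / 2)) with hδ'def
  have hδ'p : 0 < δ' := lt_min hδ (lt_min one_pos hεp)
  have hδ'δ : δ' ≤ δ := min_le_left _ _
  have hδ'1 : δ' ≤ 1 := (min_le_right _ _).trans (min_le_left _ _)
  have hδ'ε : δ' ≤ ε / 2 := (min_le_right _ _).trans (min_le_right _ _)
  have hr : (0 : ENNReal) < ENNReal.ofReal δ' := ENNReal.ofReal_pos.2 hδ'p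
  filter_upwards [hconv.eventually (gt_mem_nhds hr)] with n hn t ht
  have ht2 : t ∈ Icc (0 : ℝ) 2 := ⟨ht.1, ht.2.trans (by norm_num)⟩
  have hx : ((t, ωn n t) : ℝ × ℝ) ∈
      (fun t => ((t, ωn n t) : ℝ × ℝ)) '' Icc (0 : ℝ) 2 ∪ {(2 : ℝ)} ×ˢ Ici (0 : ℝ) :=
    Or.inl (mem_image_of_mem _ ht2)
  have hinf : EMetric.infEdist ((t, ωn n t) : ℝ × ℝ)
      ((fun t => ((t, ω t) : ℝ × ℝ)) '' Icc (0 : ℝ) 2 ∪ {(2 : ℝ)} ×ˢ Ici (0 : ℝ)) <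
      ENNReal.ofReal δ' :=
    lt_of_le_of_lt (EMetric.infEdist_le_hausdorffEdist_of_mem hx) hn
  obtain ⟨y, hy, hyd⟩ := EMetric.infEdist_lt_iff.mp hinf
  have hdist : dist ((t, ωn n t) : ℝ × ℝ) y < δ' := by
    rw [edist_lt_ofReal] at hyd; exact hyd
  rw [Prod.dist_eq] at hdist
  obtain ⟨h1, h2⟩ := max_lt_iff.mp hdist
  rcases hy with ⟨s, hs, hseq⟩ | hy
  · simp only [← hseq] at h1 h2
    have hts : dist t s < δ := lt_of_lt_of_le h1 hδ'δ
    have hωts : dist (ω t) (ω s) < ε / 2 := hδω t ht2 s hs hts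
    have : dist (ω t) (ωn n t) ≤ dist (ω t) (ω s) + dist (ω s) (ωn n t) :=
      dist_triangle _ _ _
    have h2' : dist (ω s) (ωn n t) < ε / 2 :=
      lt_of_lt_of_le (dist_comm (ωn n t) (ω s) ▸ h2) hδ'ε
    calc dist (ω t) (ωn n t) ≤ dist (ω t) (ω s) + dist (ω s) (ωn n t) := this
      _ < ε / 2 + ε / 2 := add_lt_add hωts h2'
      _ = ε := by ring
  · exfalso
    have hy1 : y.1 = 2 := by
      rcases hy with ⟨hy1, _⟩
      simpa using hy1
    rw [hy1, Real.dist_eq] at h1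
    have : |t - 2| = 2 - t := by rw [abs_of_nonpos (by linarith [ht.2] : t - 2 ≤ 0)]; ring
    rw [this] at h1
    linarith [ht.2, hδ'1]
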